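/- Let 1 < q < ∞, let G : (0,∞) → [0,∞) be measurable and locally integrable (so that ∫₀^r G(s) ds < ∞ for every r > 0), and let W : (0,∞) → [0,∞] be measurable. Then ∫₀^∞ W(r) (∫₀^r G(s) ds)^q dr = q ∫₀^∞ G(s) (∫₀^s G(r) dr)^{q-1} (∫_s^∞ W(r) dr) ds, where both sides are interpreted as (possibly infinite) Lebesgue integrals with values in [0,∞]. -/

import Mathlib

open MeasureTheory Set ENNReal


lemma ibp_phi_mono (ν : Measure ℝ) : Monotone (fun r : ℝ => ν (Ioc (0:ℝ) r)) :=
  fun _ _ h => measure_mono (Ioc_subset_Ioc_right h)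

lemma ibp_cont_left (ν : Measure ℝ) (h0 : ∀ x : ℝ, ν {x} = 0) (c : ℝ) (T : ℝ≥0∞)
    (hs : ∀ s : ℝ, s < c → ν (Ioc (0:ℝ) s) ≤ T) : ν (Ioc (0:ℝ) c) ≤ T := by
  rcases le_or_gt c 0 with hc | hc
  · simp [Ioc_eq_empty_of_le hc]
  · have h1 : ν (Ioc (0:ℝ) c) ≤ ν (Ioo (0:ℝ) c) := by
      calc ν (Ioc (0:ℝ) c) ≤ ν (Ioo (0:ℝ) c ∪ {c}) := by
            apply measure_mono; intro x hx
            rcases eq_or_lt_of_le hx.2 with h | h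
            · exact Or.inr (by simp [h])
            · exact Or.inl ⟨hx.1, h⟩
        _ ≤ ν (Ioo (0:ℝ) c) + ν {c} := measure_union_le _ _
        _ = ν (Ioo (0:ℝ) c) := by rw [h0, add_zero]
    have h2 : Ioo (0:ℝ) c = ⋃ n : ℕ, Ioc (0:ℝ) (c - c/(n+1)) := by
      ext x
      simp only [mem_Ioo, mem_iUnion, mem_Ioc]
      constructor
      · rintro ⟨hx0, hxc⟩
        obtain ⟨n, hn⟩ := exists_nat_gt (c / (c - x))
        refine ⟨n, hx0, ?_⟩
        have hcx : 0 < c - x := by linarith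
        have hn1 : c / (c - x) < n + 1 := by linarith
        have : c / (n+1) < c - x := by
          rw [div_lt_iff₀ (by positivity)] at hn1 ⊢
          nlinarith
        linarith
      · rintro ⟨n, hx0, hxn⟩
        have : (0:ℝ) < c / (n+1) := by positivity
        exact ⟨hx0, by linarith⟩
    have hmono : Monotone (fun n : ℕ => Ioc (0:ℝ) (c - c/(n+1))) := by
      intro m n hmn
      apply Ioc_subset_Ioc_right
      have : c / (n+1) ≤ c / (m+1) := by
        apply div_le_div_of_nonneg_left hc.le (by positivity)
        exact_mod_cast by exact_mod_cast add_le_add_left (Nat.cast_le.2 hmn) 1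
      linarith
    calc ν (Ioc (0:ℝ) c) ≤ ν (Ioo (0:ℝ) c) := h1
      _ = ⨆ n : ℕ, ν (Ioc (0:ℝ) (c - c/(n+1))) := by rw [h2, hmono.measure_iUnion]
      _ ≤ T := by
        apply iSup_le; intro n
        apply hs
        have : (0:ℝ) < c / (n+1) := by positivity
        linarith

lemma ibp_cont_right (ν : Measure ℝ) (hfin : ∀ r : ℝ, ν (Ioc (0:ℝ) r) ≠ ∞)
    {c r : ℝ} (hcr : c < r) (T : ℝ≥0∞)
    (hs : ∀ s : ℝ, c < s → s ≤ r → T ≤ ν (Ioc (0:ℝ) s)) : T ≤ ν (Ioc (0:ℝ) c) := by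
  have h2 : Ioc (0:ℝ) c = ⋂ n : ℕ, Ioc (0:ℝ) (c + (r - c)/(n+1)) := by
    ext x
    simp only [mem_Ioc, mem_iInter]
    constructor
    · rintro ⟨hx0, hxc⟩ n
      have hrc : (0:ℝ) < r - c := by linarith
      have : (0:ℝ) < (r - c)/(n+1) := by positivity
      exact ⟨hx0, by linarith⟩
    · intro h
      refine ⟨(h 0).1, ?_⟩
      by_contra hxc
      push_neg at hxc
      obtain ⟨n, hn⟩ := exists_nat_gt ((r - c) / (x - c))
      have hxc' : 0 < x - c := by linarith
      have hn1 : (r - c) / (x - c) < n + 1 := by linarith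
      have : (r - c) / (n+1) < x - c := by
        rw [div_lt_iff₀ (by positivity)] at hn1 ⊢
        nlinarith
      have := (h n).2
      linarith
  have hanti : Antitone (fun n : ℕ => Ioc (0:ℝ) (c + (r - c)/(n+1))) := by
    intro m n hmn
    apply Ioc_subset_Ioc_right
    have : (r - c) / (n+1) ≤ (r - c) / (m+1) := by
      apply div_le_div_of_nonneg_left (by linarith) (by positivity)
      exact_mod_cast add_le_add_left (Nat.cast_le.2 hmn) 1
    linarith
  rw [h2, hanti.measure_iInter (fun n => (measurableSet_Ioc).nullMeasurableSet)
    ⟨0, hfin _⟩]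
  apply le_iInf; intro n
  apply hs
  · have hrc : (0:ℝ) < r - c := by linarith
    have : (0:ℝ) < (r - c)/(n+1) := by positivity
    linarith
  · have h1 : (r - c)/(n+1) ≤ r - c := by
      rw [div_le_iff₀ (by positivity)]
      nlinarith
    linarith

lemma ibp_dist (ν : Measure ℝ) (h0 : ∀ x : ℝ, ν {x} = 0)
    (hfin : ∀ r : ℝ, ν (Ioc (0:ℝ) r) ≠ ∞)
    {r : ℝ} (hr : 0 < r) (T : ℝ≥0∞) :
    ν {s : ℝ | s ∈ Ioc (0:ℝ) r ∧ T < ν (Ioc (0:ℝ) s)} = ν (Ioc (0:ℝ) r) - T := by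
  set Φ : ℝ → ℝ≥0∞ := fun s => ν (Ioc (0:ℝ) s) with hΦ
  set U : Set ℝ := {s : ℝ | s ∈ Ioc (0:ℝ) r ∧ T < Φ s} with hUdef
  set c : ℝ := sInf (U ∪ {r}) with hcdef
  have hbdd : BddBelow (U ∪ {r}) := by
    refine ⟨0, ?_⟩
    rintro x (hx | hx)
    · exact hx.1.1.le
    · simp only [mem_singleton_iff] at hx; simp [hx, hr.le]
  have hne : (U ∪ {r}).Nonempty := ⟨r, Or.inr rfl⟩
  have hcr : c ≤ r := csInf_le hbdd (Or.inr rfl)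
  have hc0 : 0 ≤ c := by
    apply le_csInf hne
    rintro x (hx | hx)
    · exact hx.1.1.le
    · simp only [mem_singleton_iff] at hx; simp [hx, hr.le]
  have hU_sub : U ⊆ Icc c r := fun u hu => ⟨csInf_le hbdd (Or.inl hu), hu.1.2⟩
  have hIoo_sub : Ioo c r ⊆ U := by
    intro s hs
    obtain ⟨u, hu, hus⟩ := exists_lt_of_csInf_lt hne hs.1
    rcases hu with hu | hu
    · exact ⟨⟨lt_trans hu.1.1 hus, hs.2.le⟩, lt_of_lt_of_le hu.2
        (measure_mono (Ioc_subset_Ioc_right hus.le))⟩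
    · simp only [mem_singleton_iff] at hu
      exact absurd (hu ▸ hus) (not_lt.2 hs.2.le)
  have hIccIoo : ν (Icc c r) ≤ ν (Ioo c r) := by
    calc ν (Icc c r) ≤ ν (Ioo c r ∪ {c} ∪ {r}) := by
          apply measure_mono
          intro x hx
          rcases eq_or_lt_of_le hx.1 with h | h
          · exact Or.inl (Or.inr (by simp [h.symm]))
          rcases eq_or_lt_of_le hx.2 with h2 | h2
          · exact Or.inr (by simp [h2])
          · exact Or.inl (Or.inl ⟨h, h2⟩)
      _ ≤ ν (Ioo c r ∪ {c}) + ν {r} := measure_union_le _ _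
      _ ≤ ν (Ioo c r) + ν {c} + ν {r} := by
          gcongr; exact measure_union_le _ _
      _ = ν (Ioo c r) := by rw [h0, h0, add_zero, add_zero]
  have hνU : ν U = ν (Ioc c r) := by
    apply le_antisymm
    · exact le_trans (measure_mono hU_sub) (le_trans hIccIoo (measure_mono Ioo_subset_Ioc_self))
    · exact le_trans (measure_mono Ioc_subset_Icc_self)
        (le_trans hIccIoo (measure_mono (hIoo_sub.trans (fun x hx => hx))))
  have hsplit : Φ c + ν (Ioc c r) = Φ r := by
    rw [hΦ]
    dsimp only
    rw [← measure_union (Set.Ioc_disjoint_Ioc_of_le le_rfl) measurableSet_Ioc,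
      Ioc_union_Ioc_eq_Ioc hc0 hcr]
  have hνIoc : ν (Ioc c r) = Φ r - Φ c := by
    rw [← hsplit, ENNReal.add_sub_cancel_left (hfin c)]
  have hlt : ∀ s : ℝ, s < c → Φ s ≤ T := by
    intro s hs
    rcases le_or_gt s 0 with h | h
    · simp [hΦ, Ioc_eq_empty_of_le h]
    · have hsU : s ∉ U := fun hsU => absurd (csInf_le hbdd (Or.inl hsU)) (not_le.2 hs)
      have hsIoc : s ∈ Ioc (0:ℝ) r := ⟨h, le_trans hs.le hcr⟩
      by_contra hT
      exact hsU ⟨hsIoc, not_le.1 hT⟩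
  have hΦcT : Φ c ≤ T := ibp_cont_left ν h0 c T hlt
  rcases eq_or_lt_of_le hcr with hceq | hclt
  · rw [hνU, hceq, Ioc_self, measure_empty]
    have : Φ r ≤ T := hceq ▸ hΦcT
    exact (tsub_eq_zero_of_le this).symm
  · have hTc : T ≤ Φ c := by
      apply ibp_cont_right ν hfin hclt
      intro s hcs hsr
      rcases eq_or_lt_of_le hsr with h | h
      · have hmid : (c + r)/2 ∈ Ioo c r := ⟨by linarith, by linarith⟩
        have := (hIoo_sub hmid).2
        exact le_trans this.le (measure_mono (Ioc_subset_Ioc_right (by rw [h]; linarith [hmid.2])))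
      · exact (hIoo_sub ⟨hcs, h⟩).2.le
    rw [hνU, hνIoc, le_antisymm hΦcT hTc]

lemma ibp_key (q : ℝ) (hq : 1 < q) (G : ℝ → ℝ≥0∞) (hG : Measurable G)
    (hGloc : ∀ r : ℝ, 0 < r → (∫⁻ s in Ioc (0 : ℝ) r, G s) < ∞)
    {r : ℝ} (hr : 0 < r) :
    (∫⁻ s in Ioc (0:ℝ) r, G s) ^ q =
      ENNReal.ofReal q *
        ∫⁻ s in Ioc (0:ℝ) r, G s * (∫⁻ u in Ioc (0:ℝ) s, G u) ^ (q - 1) := by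
  set ν : Measure ℝ := volume.withDensity G with hνdef
  have hνIoc : ∀ s : ℝ, ν (Ioc (0:ℝ) s) = ∫⁻ u in Ioc (0:ℝ) s, G u :=
    fun s => withDensity_apply G measurableSet_Ioc
  have hν0 : ∀ x : ℝ, ν {x} = 0 := by
    intro x
    rw [hνdef, withDensity_apply G (measurableSet_singleton x),
      Measure.restrict_eq_zero.2 (by simp), lintegral_zero_measure]
  have hνfin : ∀ s : ℝ, ν (Ioc (0:ℝ) s) ≠ ∞ := by
    intro s
    rcases le_or_gt s 0 with h | h
    · simp [Ioc_eq_empty_of_le h]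
    · rw [hνIoc]; exact (hGloc s h).ne
  set Φ : ℝ → ℝ≥0∞ := fun s => ν (Ioc (0:ℝ) s) with hΦdef
  have hΦmeas : Measurable Φ := (ibp_phi_mono ν).measurable
  have hΦmono : Monotone Φ := ibp_phi_mono ν
  set A : ℝ≥0∞ := Φ r with hAdef
  have hAfin : A ≠ ∞ := hνfin r
  -- rewrite goal in terms of Φ, A
  have hgoal : (∫⁻ s in Ioc (0:ℝ) r, G s) = A := (hνIoc r).symm
  rw [hgoal]
  have hinteg : ∀ s : ℝ, G s * (∫⁻ u in Ioc (0:ℝ) s, G u) ^ (q - 1)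
      = G s * Φ s ^ (q - 1) := by intro s; rw [hΦdef]; simp [hνIoc s]
  simp_rw [hinteg]
  rcases eq_or_ne A 0 with hA0 | hA0
  · rw [hA0, ENNReal.zero_rpow_of_pos (by linarith)]
    have hz : ∫⁻ s in Ioc (0:ℝ) r, G s * Φ s ^ (q - 1) = 0 := by
      rw [← lintegral_zero (μ := volume.restrict (Ioc (0:ℝ) r))]
      apply setLIntegral_congr_fun measurableSet_Ioc
      simp only [EqOn]
      intro s hs
      have hΦ0 : Φ s = 0 := le_antisymm (hA0 ▸ hΦmono hs.2) (by simp)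
      rw [hΦ0, ENNReal.zero_rpow_of_pos (by linarith), mul_zero]
    rw [hz, mul_zero]
  · -- main case
    have hq1 : (0:ℝ) < q - 1 := by linarith
    set a : ℝ := A.toReal with hadef
    have hA : A = ENNReal.ofReal a := (ofReal_toReal hAfin).symm
    have ha : 0 < a := toReal_pos hA0 hAfin
    -- Step 1: withDensity
    have step1 : ∫⁻ s in Ioc (0:ℝ) r, G s * Φ s ^ (q - 1)
        = ∫⁻ s in Ioc (0:ℝ) r, Φ s ^ (q - 1) ∂ν := by
      exact (setLIntegral_withDensity_eq_setLIntegral_mul volume hG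
        (g := fun s => Φ s ^ (q - 1))
        (ENNReal.continuous_rpow_const.measurable.comp hΦmeas) measurableSet_Ioc).symm
    -- Step 2: to ofReal form
    have step2 : ∫⁻ s in Ioc (0:ℝ) r, Φ s ^ (q - 1) ∂ν
        = ∫⁻ s in Ioc (0:ℝ) r, ENNReal.ofReal ((Φ s).toReal ^ (q - 1)) ∂ν := by
      apply setLIntegral_congr_fun measurableSet_Ioc
      simp only [EqOn]
      intro s _
      rw [← ofReal_toReal (show Φ s ≠ ⊤ from hνfin s), ENNReal.ofReal_rpow_of_nonneg toReal_nonneg (by linarith),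
        toReal_ofReal toReal_nonneg]
    -- Step 3: layer cake
    have step3 : ∫⁻ s in Ioc (0:ℝ) r, ENNReal.ofReal ((Φ s).toReal ^ (q - 1)) ∂ν
        = ENNReal.ofReal (q-1) * ∫⁻ t in Ioi (0:ℝ),
            (ν.restrict (Ioc (0:ℝ) r)) {s : ℝ | t < (Φ s).toReal} * ENNReal.ofReal (t ^ (q-1-1)) :=
      lintegral_rpow_eq_lintegral_meas_lt_mul (ν.restrict (Ioc (0:ℝ) r))
        (ae_of_all _ fun s => toReal_nonneg)
        (hΦmeas.ennreal_toReal).aemeasurable hq1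
    -- Step 4: identify the distribution function
    have step4 : ∫⁻ t in Ioi (0:ℝ),
          (ν.restrict (Ioc (0:ℝ) r)) {s : ℝ | t < (Φ s).toReal} * ENNReal.ofReal (t ^ (q-1-1))
        = ∫⁻ t in Ioi (0:ℝ), (A - ENNReal.ofReal t) * ENNReal.ofReal (t ^ (q-2)) := by
      apply setLIntegral_congr_fun measurableSet_Ioi
      simp only [EqOn]
      intro t ht
      have hmeas : MeasurableSet {s : ℝ | t < (Φ s).toReal} :=
        measurableSet_lt measurable_const hΦmeas.ennreal_toReal
      rw [Measure.restrict_apply hmeas]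
      have hset : {s : ℝ | t < (Φ s).toReal} ∩ Ioc (0:ℝ) r
          = {s : ℝ | s ∈ Ioc (0:ℝ) r ∧ ENNReal.ofReal t < Φ s} := by
        ext s
        simp only [mem_inter_iff, mem_setOf_eq, and_comm]
        rw [ofReal_lt_iff_lt_toReal (le_of_lt ht) (hνfin s)]
      rw [hset, ibp_dist ν hν0 hνfin hr (ENNReal.ofReal t)]
      rw [show q - 1 - 1 = q - 2 by ring]
    rw [step1, step2, step3, step4]
    -- Step 5: compute the remaining integral
    have hsplit : Ioi (0:ℝ) = Ioo 0 a ∪ Ici a := by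
      ext t
      simp only [mem_Ioi, mem_union, mem_Ioo, mem_Ici]
      constructor
      · intro h; rcases lt_or_ge t a with h2 | h2
        · exact Or.inl ⟨h, h2⟩
        · exact Or.inr h2
      · rintro (⟨h, _⟩ | h)
        · exact h
        · linarith
    have hdisj : Disjoint (Ioo (0:ℝ) a) (Ici a) := by
      rw [disjoint_left]; rintro t ⟨_, h2⟩ h3; exact absurd h3 (not_le.2 h2)
    have hzero : ∫⁻ t in Ici a, (A - ENNReal.ofReal t) * ENNReal.ofReal (t ^ (q-2)) = 0 := by
      rw [← lintegral_zero (μ := volume.restrict (Ici a))]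
      apply setLIntegral_congr_fun measurableSet_Ici
      simp only [EqOn]
      intro t htt
      have : A ≤ ENNReal.ofReal t := by rw [hA]; exact ENNReal.ofReal_le_ofReal htt
      rw [tsub_eq_zero_of_le this, zero_mul]
    have hmain : ∫⁻ t in Ioo (0:ℝ) a, (A - ENNReal.ofReal t) * ENNReal.ofReal (t ^ (q-2))
        = ENNReal.ofReal (a * (a ^ (q-1) / (q-1)) - a ^ q / q) := by
      have hcongr : ∫⁻ t in Ioo (0:ℝ) a, (A - ENNReal.ofReal t) * ENNReal.ofReal (t ^ (q-2))
          = ∫⁻ t in Ioo (0:ℝ) a, ENNReal.ofReal (a * t ^ (q-2) - t ^ (q-1)) := by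
        apply setLIntegral_congr_fun measurableSet_Ioo
        simp only [EqOn]
        intro t htt
        have ht0 : 0 < t := htt.1
        have hta : t < a := htt.2
        have hAt : A - ENNReal.ofReal t = ENNReal.ofReal (a - t) := by
          rw [hA, ← ENNReal.ofReal_sub a ht0.le]
        rw [hAt, ← ENNReal.ofReal_mul (by linarith)]
        congr 1
        have : t ^ (q-1) = t * t ^ (q-2) := by
          rw [← Real.rpow_one_add' ht0.le (by linarith)]
          congr 1; ring
        rw [this]; ring
      rw [hcongr]
      have hi1 : IntegrableOn (fun t : ℝ => t ^ (q-2)) (Ioo (0:ℝ) a) volume := by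
        have := intervalIntegral.intervalIntegrable_rpow' (a := 0) (b := a) (r := q-2)
          (by linarith)
        exact ((intervalIntegrable_iff_integrableOn_Ioc_of_le ha.le).1 this).mono_set
          Ioo_subset_Ioc_self
      have hi2 : IntegrableOn (fun t : ℝ => t ^ (q-1)) (Ioo (0:ℝ) a) volume := by
        have := intervalIntegral.intervalIntegrable_rpow' (a := 0) (b := a) (r := q-1)
          (by linarith)
        exact ((intervalIntegrable_iff_integrableOn_Ioc_of_le ha.le).1 this).mono_set
          Ioo_subset_Ioc_self
      have hint : IntegrableOn (fun t : ℝ => a * t ^ (q-2) - t ^ (q-1)) (Ioo (0:ℝ) a) volume :=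
        (hi1.const_mul a).sub hi2
      rw [← ofReal_integral_eq_lintegral_ofReal hint]
      · congr 1
        rw [← integral_Ioc_eq_integral_Ioo, ← intervalIntegral.integral_of_le ha.le]
        rw [intervalIntegral.integral_sub ((intervalIntegral.intervalIntegrable_rpow'
            (by linarith : (-1:ℝ) < q-2)).const_mul a)
          (intervalIntegral.intervalIntegrable_rpow' (by linarith : (-1:ℝ) < q-1))]
        rw [intervalIntegral.integral_const_mul, integral_rpow (Or.inl (by linarith)),
          integral_rpow (Or.inl (by linarith))]
        rw [Real.zero_rpow (by linarith : q - 2 + 1 ≠ 0),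
          Real.zero_rpow (by linarith : q - 1 + 1 ≠ 0)]
        ring_nf
      · filter_upwards [self_mem_ae_restrict measurableSet_Ioo] with t htt
        have ht0 : 0 < t := htt.1
        have hta : t ≤ a := htt.2.le
        have h1 : t ^ (q-1) = t * t ^ (q-2) := by
          rw [← Real.rpow_one_add' ht0.le (by linarith)]
          congr 1; ring
        have h2 : (0:ℝ) ≤ t ^ (q-2) := Real.rpow_nonneg ht0.le _
        simp only [Pi.zero_apply]
        rw [h1]
        nlinarith
    have hK : ∫⁻ t in Ioi (0:ℝ), (A - ENNReal.ofReal t) * ENNReal.ofReal (t ^ (q-2))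
        = ENNReal.ofReal (a * (a ^ (q-1) / (q-1)) - a ^ q / q) := by
      rw [hsplit, lintegral_union measurableSet_Ici hdisj, hzero, add_zero, hmain]
    rw [hK, ← ENNReal.ofReal_mul (by linarith : (0:ℝ) ≤ q - 1),
      ← ENNReal.ofReal_mul (by linarith : (0:ℝ) ≤ q), hA,
      ENNReal.ofReal_rpow_of_nonneg toReal_nonneg (by linarith : (0:ℝ) ≤ q)]
    congr 1
    have haq : a * a ^ (q-1) = a ^ q := by
      rw [← Real.rpow_one_add' ha.le (by linarith)]
      congr 1; ring
    have hne1 : q - 1 ≠ 0 := by linarith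
    have hne2 : q ≠ 0 := by linarith
    rw [mul_div_assoc', haq]
    field_simp
    ring


/-- Theorem (a one-dimensional integration-by-parts identity): for `1 < q < ∞`,
`G : (0,∞) → [0,∞)` measurable and locally integrable and `W : (0,∞) → [0,∞]`
measurable, one has
`∫₀^∞ W(r) (∫₀^r G(s) ds)^q dr = q ∫₀^∞ G(s) (∫₀^s G(r) dr)^{q-1} (∫_s^∞ W(r) dr) ds`,
both sides being Lebesgue integrals valued in `[0,∞]`. -/
theorem lintegral_pow_integration_by_parts
    (q : ℝ) (hq : 1 < q)
    (G W : ℝ → ℝ≥0∞) (hG : Measurable G) (hW : Measurable W)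
    (hGfin : ∀ s, G s ≠ ∞)
    (hGloc : ∀ r : ℝ, 0 < r → (∫⁻ s in Ioc (0 : ℝ) r, G s) < ∞) :
    ∫⁻ r in Ioi (0 : ℝ), W r * (∫⁻ s in Ioc (0 : ℝ) r, G s) ^ q =
      ENNReal.ofReal q *
        ∫⁻ s in Ioi (0 : ℝ),
          G s * (∫⁻ r in Ioc (0 : ℝ) s, G r) ^ (q - 1) * (∫⁻ r in Ioi s, W r) := by
  have hΦmeas : Measurable (fun s : ℝ => ∫⁻ u in Ioc (0:ℝ) s, G u) := by
    have h : (fun s : ℝ => ∫⁻ u in Ioc (0:ℝ) s, G u)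
        = fun s => (volume.withDensity G) (Ioc (0:ℝ) s) := by
      funext s; rw [withDensity_apply G measurableSet_Ioc]
    rw [h]; exact (ibp_phi_mono _).measurable
  set H : ℝ → ℝ≥0∞ := fun s => G s * (∫⁻ u in Ioc (0:ℝ) s, G u) ^ (q - 1) with hHdef
  have hHmeas : Measurable H :=
    hG.mul (ENNReal.continuous_rpow_const.measurable.comp hΦmeas)
  have hLHS : ∫⁻ r in Ioi (0:ℝ), W r * (∫⁻ s in Ioc (0:ℝ) r, G s) ^ q
      = ENNReal.ofReal q * ∫⁻ r in Ioi (0:ℝ), W r * ∫⁻ s in Ioc (0:ℝ) r, H s := by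
    rw [← lintegral_const_mul' (ENNReal.ofReal q) _ ofReal_ne_top]
    apply setLIntegral_congr_fun measurableSet_Ioi
    simp only [EqOn]
    intro r hr
    rw [ibp_key q hq G hG hGloc hr]
    ring
  rw [hLHS]
  congr 1
  -- Tonelli
  set T : Set (ℝ × ℝ) := {p : ℝ × ℝ | 0 < p.2 ∧ p.2 ≤ p.1} with hTdef
  have hTmeas : MeasurableSet T :=
    (measurableSet_lt measurable_const measurable_snd).inter
      (measurableSet_le measurable_snd measurable_fst)
  set F : ℝ → ℝ → ℝ≥0∞ := fun r s => T.indicator (fun p : ℝ × ℝ => W p.1 * H p.2) (r, s)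
    with hFdef
  have hFmeas : Measurable (Function.uncurry F) := by
    have : Function.uncurry F = T.indicator (fun p : ℝ × ℝ => W p.1 * H p.2) := rfl
    rw [this]
    exact ((hW.comp measurable_fst).mul (hHmeas.comp measurable_snd)).indicator hTmeas
  have stepA : ∀ r : ℝ, W r * ∫⁻ s in Ioc (0:ℝ) r, H s = ∫⁻ s in Ioi (0:ℝ), F r s := by
    intro r
    have h1 : (fun s => F r s) = (Ioc (0:ℝ) r).indicator (fun s => W r * H s) := by
      funext s
      by_cases h : s ∈ Ioc (0:ℝ) r
      · rw [indicator_of_mem h]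
        exact indicator_of_mem (by exact ⟨h.1, h.2⟩) _
      · rw [indicator_of_notMem h]
        exact indicator_of_notMem (fun hc => h ⟨hc.1, hc.2⟩) _
    rw [h1, lintegral_indicator measurableSet_Ioc, Measure.restrict_restrict measurableSet_Ioc,
      inter_eq_left.2 (fun x hx => hx.1), lintegral_const_mul (W r) hHmeas]
  have stepC : ∀ s : ℝ, s ∈ Ioi (0:ℝ) →
      (∫⁻ r in Ioi (0:ℝ), F r s) = H s * ∫⁻ r in Ioi s, W r := by
    intro s hs
    have h1 : (fun r => F r s) = (Ici s).indicator (fun r => W r * H s) := by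
      funext r
      by_cases h : r ∈ Ici s
      · rw [indicator_of_mem h]
        exact indicator_of_mem (by exact ⟨hs, h⟩) _
      · rw [indicator_of_notMem h]
        exact indicator_of_notMem (fun hc => h hc.2) _
    have hIci : Ici s ∩ Ioi (0:ℝ) = Ici s :=
      inter_eq_left.2 (fun x hx => show (0:ℝ) < x from lt_of_lt_of_le hs hx)
    rw [h1, lintegral_indicator measurableSet_Ici, Measure.restrict_restrict measurableSet_Ici,
      hIci, setLIntegral_congr (α := ℝ) Ioi_ae_eq_Ici.symm,
      lintegral_mul_const (H s) hW, mul_comm]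
  calc ∫⁻ r in Ioi (0:ℝ), W r * ∫⁻ s in Ioc (0:ℝ) r, H s
      = ∫⁻ r in Ioi (0:ℝ), ∫⁻ s in Ioi (0:ℝ), F r s := by
        apply setLIntegral_congr_fun measurableSet_Ioi
        exact fun r _ => stepA r
    _ = ∫⁻ s in Ioi (0:ℝ), ∫⁻ r in Ioi (0:ℝ), F r s := lintegral_lintegral_swap hFmeas.aemeasurable
    _ = ∫⁻ s in Ioi (0:ℝ), H s * ∫⁻ r in Ioi s, W r := by
        apply setLIntegral_congr_fun measurableSet_Ioi
        exact stepC
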